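/- Let Γ be a nonempty finite set and N a quadratic normalisation on Γ satisfying Conditions (unit) and (home). Then the monoid S¹ presented by (Γ,N) is residually finite: for any two distinct elements x, y of S¹ there exist a finite monoid F and a monoid homomorphism f : S¹ → F with f(x) ≠ f(y). -/

import Mathlib

namespace Stmt5

variable {α : Type}

/-- Apply the two-letter normalisation `nf` at (1-indexed) position `i` of a word. -/
def applyAtL (nf : α → α → List α) : ℕ → List α → List α
  | 1, x :: y :: s => nf x y ++ s
  | n + 2, x :: s => x :: applyAtL nf (n + 1) s
  | _, w => w

/-- Apply the two-letter normalisation along a finite sequence of positions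
(the first position in the list is applied first). -/
def seqApplyL (nf : α → α → List α) (l : List ℕ) (w : List α) : List α :=
  l.foldl (fun w i => applyAtL nf i w) w

/-- The defining relations of the monoid `S¹`: all pairs `(w, N w)` for nonempty `w`,
together with the pair `([𝟙], ε)`. -/
def presRel (N : List α → List α) (e : α) : FreeMonoid α → FreeMonoid α → Prop :=
  fun x y =>
    (FreeMonoid.toList x ≠ [] ∧ FreeMonoid.toList y = N (FreeMonoid.toList x)) ∨
      (FreeMonoid.toList x = [e] ∧ FreeMonoid.toList y = [])

/-- A monoid `M` is residually finite if distinct elements can be separated by a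
homomorphism to a finite monoid. -/
def ResiduallyFinite (M : Type) [Monoid M] : Prop :=
  ∀ x y : M, x ≠ y →
    ∃ (F : Type) (mF : Monoid F)
      (f : @MonoidHom M F MulOneClass.toMulOne mF.toMulOneClass.toMulOne),
      Finite F ∧ f x ≠ f y

section Aux

variable {Γ : Type}

/-- Bundle of the hypotheses of the main theorem. -/
structure Good (N : List Γ → List Γ) (e : Γ) : Prop where
  hlen : ∀ w : List Γ, (N w).length = w.length
  hone : ∀ x : Γ, N [x] = [x]
  habs : ∀ u w v : List Γ, w ≠ [] → N (u ++ N w ++ v) = N (u ++ w ++ v)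
  hquad₁ : ∀ w : List Γ, w ≠ [] →
      (N w = w ↔ ∀ p s : List Γ, ∀ x y : Γ, w = p ++ [x, y] ++ s → N [x, y] = [x, y])
  hunit : ∀ w : List Γ, w ≠ [] →
      N (e :: w) = e :: N w ∧ N (w ++ [e]) = e :: N w
  hhome : ∀ x y z : Γ,
      N [x, y, z] = seqApplyL (fun a b => N [a, b]) [1, 2, 1] [x, y, z] ∧
      N [x, y, z] = seqApplyL (fun a b => N [a, b]) [2, 1, 2, 1] [x, y, z]

variable (N : List Γ → List Γ) (e : Γ)

/-- Normal pair relation. -/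
def NP : Γ → Γ → Prop := fun x y => N [x, y] = [x, y]

/-- A word is normal iff chain of normal pairs. -/
abbrev Nrm (w : List Γ) : Prop := List.Chain' (NP N) w

/-- `strip` removes the leading `e`'s. -/
def strip [DecidableEq Γ] : List Γ → List Γ
  | [] => []
  | x :: t => if x = e then strip t else x :: t

/-- Right-to-left sweep appending letter `a` to a word. -/
def rsweep : List Γ → Γ → List Γ
  | [], a => [a]
  | x :: t, a =>
    match rsweep t a with
    | [] => []
    | c :: r => N [x, c] ++ r

/-- last `n` letters. -/
def rtake (n : ℕ) (l : List Γ) : List Γ := l.drop (l.length - n)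

def N' : List Γ → List Γ
  | [] => []
  | w => N w

def Phi [DecidableEq Γ] (w : List Γ) : List Γ := strip e (N' N w)

def tau [DecidableEq Γ] (n : ℕ) (w : List Γ) : List Γ := rtake n (Phi N e w)

variable {N e}

lemma N'_nil : N' N [] = [] := rfl

lemma N'_ne (w : List Γ) (hw : w ≠ []) : N' N w = N w := by
  cases w with
  | nil => exact absurd rfl hw
  | cons x t => rfl

section withGood

variable (H : Good N e)
include H

lemma len2 (x y : Γ) : (N [x, y]).length = 2 := by rw [H.hlen]; rfl

lemma pair_eq (x y : Γ) : ∃ a b, N [x, y] = [a, b] := List.length_eq_two.1 (len2 H x y)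

lemma N_ne_nil {w : List Γ} (hw : w ≠ []) : N w ≠ [] := by
  intro h
  apply hw
  have := H.hlen w
  rw [h] at this
  exact List.eq_nil_of_length_eq_zero this.symm

lemma hNN {w : List Γ} (hw : w ≠ []) : N (N w) = N w := by
  have := H.habs [] w [] hw
  simpa using this

end withGood

/-- `Chain'` is the same as the "all length-2 factors" condition. -/
lemma chain'_iff_factors {R : Γ → Γ → Prop} :
    ∀ w : List Γ, List.Chain' R w ↔ ∀ p s : List Γ, ∀ x y : Γ, w = p ++ [x, y] ++ s → R x y := by
  intro w
  induction w with
  | nil =>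
    simp only [show List.Chain' R [] from List.isChain_nil, true_iff]
    intro p s x y h
    exact absurd h (by simp)
  | cons a t ih =>
    show List.IsChain R (a :: t) ↔ _
    rw [List.isChain_cons]
    constructor
    · rintro ⟨h1, h2⟩ p s x y hdec
      cases p with
      | nil =>
        simp only [List.nil_append, List.cons_append, List.cons.injEq] at hdec
        obtain ⟨rfl, rfl⟩ := hdec
        exact h1 y rfl
      | cons q p' =>
        simp only [List.cons_append, List.cons.injEq] at hdec
        obtain ⟨rfl, ht⟩ := hdec
        exact (ih.1 h2) p' s x y ht
    · intro h
      constructor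
      · intro y hy
        cases t with
        | nil => simp at hy
        | cons b t' =>
          simp only [List.head?_cons, Option.mem_some_iff] at hy
          subst hy
          exact h [] t' a _ rfl
      · apply ih.2
        intro p s x y ht
        exact h (a :: p) s x y (by rw [ht]; rfl)

section Aux2

variable {Γ : Type} {N : List Γ → List Γ} {e : Γ}

section withGood
variable (H : Good N e)
include H

lemma nrm_iff {w : List Γ} (hw : w ≠ []) : N w = w ↔ Nrm N w :=
  (H.hquad₁ w hw).trans (chain'_iff_factors w).symm

lemma nrm_N {w : List Γ} (hw : w ≠ []) : Nrm N (N w) :=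
  (nrm_iff H (N_ne_nil H hw)).1 (hNN H hw)

lemma pair_er (x : Γ) : N [x, e] = [e, x] := by
  have := (H.hunit [x] (by simp)).2
  rw [H.hone] at this
  simpa using this

lemma pair_el (x : Γ) : N [e, x] = [e, x] := by
  have := (H.hunit [x] (by simp)).1
  rw [H.hone] at this
  simpa using this

lemma eq_e_of_np {x : Γ} (h : NP N x e) : x = e := by
  unfold NP at h
  rw [pair_er H] at h
  exact (List.cons.inj h).1.symm

/-- In a normal word, every letter before an `e` is an `e`. -/
lemma all_e (X R : List Γ) (h : Nrm N (X ++ e :: R)) : ∀ x ∈ X, x = e := by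
  induction X with
  | nil => simp
  | cons a X' ih =>
    have htail : Nrm N (X' ++ e :: R) := by
      have := h.tail
      exact (by simpa using this : List.IsChain (NP N) (X' ++ e :: R))
    have hX' := ih htail
    have hae : a = e := by
      cases X' with
      | nil =>
        have := (List.isChain_cons_cons.mp h).1
        exact eq_e_of_np H this
      | cons b X'' =>
        have hb : b = e := hX' b (by simp)
        have := (List.isChain_cons_cons.mp h).1
        rw [hb] at this
        exact eq_e_of_np H this
    intro x hx
    rcases List.mem_cons.mp hx with rfl | hx
    · exact hae
    · exact hX' x hx

/-- In a normal word starting with a non-`e` letter, `e` does not occur. -/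
lemma e_notin : ∀ (l : List Γ), Nrm N l → ∀ x t, l = x :: t → x ≠ e → e ∉ l := by
  intro l
  induction l with
  | nil => intro _ x t h; simp at h
  | cons y t' ih =>
    rintro h x t heq hxe
    obtain ⟨rfl, rfl⟩ : x = y ∧ t = t' := by
      constructor <;> [exact (List.cons.inj heq).1.symm; exact (List.cons.inj heq).2.symm]
    intro hmem
    rcases List.mem_cons.mp hmem with h1 | h1
    · exact hxe h1.symm
    · cases t with
      | nil => simp at h1
      | cons z t'' =>
        have hz : z ≠ e := by
          intro hz
          apply hxe
          have := (List.isChain_cons_cons.mp h).1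
          rw [hz] at this
          exact eq_e_of_np H this
        exact ih h.tail z t'' rfl hz h1

end withGood

section withDec
variable [DecidableEq Γ]

lemma strip_nil : strip e ([] : List Γ) = [] := rfl

lemma strip_cons_e (t : List Γ) : strip e (e :: t) = strip e t := by
  simp [strip]

lemma strip_cons_ne {x : Γ} (t : List Γ) (hx : x ≠ e) : strip e (x :: t) = x :: t := by
  simp [strip, hx]

lemma strip_suffix (l : List Γ) : strip e l <:+ l := by
  induction l with
  | nil => exact List.suffix_refl _
  | cons x t ih =>
    by_cases hx : x = e
    · subst hx
      rw [strip_cons_e]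
      exact ih.trans (List.suffix_cons _ _)
    · rw [strip_cons_ne t hx]

lemma strip_decomp (l : List Γ) : ∃ X, l = X ++ strip e l ∧ ∀ x ∈ X, x = e := by
  induction l with
  | nil => exact ⟨[], rfl, by simp⟩
  | cons x t ih =>
    by_cases hx : x = e
    · subst hx
      obtain ⟨X, h1, h2⟩ := ih
      refine ⟨x :: X, ?_, ?_⟩
      · rw [strip_cons_e]
        simpa using h1
      · intro y hy
        rcases List.mem_cons.mp hy with rfl | hy
        · rfl
        · exact h2 y hy
    · exact ⟨[], by rw [strip_cons_ne t hx]; simp, by simp⟩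

lemma strip_all_e {X : List Γ} (r : List Γ) (hX : ∀ x ∈ X, x = e) :
    strip e (X ++ r) = strip e r := by
  induction X with
  | nil => rfl
  | cons x X' ih =>
    have hx : x = e := hX x (by simp)
    subst hx
    rw [List.cons_append, strip_cons_e]
    exact ih (fun y hy => hX y (by simp [hy]))

lemma strip_head_ne : ∀ (l : List Γ) {x : Γ} {t : List Γ}, strip e l = x :: t → x ≠ e := by
  intro l
  induction l with
  | nil => intro x t h; simp [strip_nil] at h
  | cons y t' ih =>
    intro x t h
    by_cases hy : y = e
    · subst hy; rw [strip_cons_e] at h; exact ih h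
    · rw [strip_cons_ne t' hy] at h
      rw [← (List.cons.inj h).1]
      exact hy

lemma strip_of_not_mem {l : List Γ} (h : e ∉ l) : strip e l = l := by
  cases l with
  | nil => rfl
  | cons x t =>
    have : x ≠ e := fun hx => h (by simp [hx])
    rw [strip_cons_ne t this]

lemma strip_append_of_not_mem {r : List Γ} (hr : e ∉ r) (A₀ : List Γ) :
    ∃ A, strip e (A₀ ++ r) = A ++ r := by
  induction A₀ with
  | nil => exact ⟨[], by simpa using strip_of_not_mem hr⟩
  | cons x A' ih =>
    by_cases hx : x = e
    · subst hx
      obtain ⟨A, hA⟩ := ih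
      exact ⟨A, by rw [List.cons_append, strip_cons_e]; exact hA⟩
    · refine ⟨x :: A', ?_⟩
      rw [List.cons_append, strip_cons_ne _ hx]

end withDec

-- rtake lemmas
lemma rtake_all {n : ℕ} {l : List Γ} (h : l.length ≤ n) : rtake n l = l := by
  unfold rtake
  rw [Nat.sub_eq_zero_of_le h, List.drop_zero]

lemma rtake_len_le (n : ℕ) (l : List Γ) : (rtake n l).length ≤ n := by
  unfold rtake
  rw [List.length_drop]
  omega

lemma rtake_suffix (n : ℕ) (l : List Γ) : rtake n l <:+ l := List.drop_suffix _ _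

lemma rtake_append {n : ℕ} {r : List Γ} (A : List Γ) (h : r.length = n) :
    rtake n (A ++ r) = r := by
  unfold rtake
  rw [List.length_append, h, Nat.add_sub_cancel, List.drop_left]

end Aux2

section Aux3

variable {Γ : Type} {N : List Γ → List Γ} {e : Γ}

lemma applyAtL_one (nf : Γ → Γ → List Γ) (x y : Γ) (s : List Γ) :
    applyAtL nf 1 (x :: y :: s) = nf x y ++ s := rfl

lemma applyAtL_two (nf : Γ → Γ → List Γ) (x : Γ) (l : List Γ) :
    applyAtL nf 2 (x :: l) = x :: applyAtL nf 1 l := rfl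

section withGood
variable (H : Good N e)
include H

lemma rsweep_length : ∀ (t : List Γ) (a : Γ), (rsweep N t a).length = t.length + 1 := by
  intro t
  induction t with
  | nil => intro a; rfl
  | cons x t ih =>
    intro a
    cases hr : rsweep N t a with
    | nil => have := ih a; rw [hr] at this; simp at this
    | cons c r =>
      have hlr : r.length = t.length := by
        have := ih a; rw [hr] at this; simpa using this
      show (rsweep N (x :: t) a).length = t.length + 2
      have : rsweep N (x :: t) a = N [x, c] ++ r := by
        simp only [rsweep, hr]
      rw [this, List.length_append, len2 H, hlr]
      omega

omit H in
lemma rsweep_cons {x : Γ} {t : List Γ} {a c : Γ} {r : List Γ} (h : rsweep N t a = c :: r) :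
    rsweep N (x :: t) a = N [x, c] ++ r := by
  simp only [rsweep, h]

lemma rsweep_ne_nil (t : List Γ) (a : Γ) : rsweep N t a ≠ [] := by
  intro h
  have := rsweep_length H t a
  rw [h] at this
  simp at this

lemma rsweep_append {w : List Γ} {a c : Γ} {r : List Γ} (h : rsweep N w a = c :: r) :
    ∀ d : List Γ, rsweep N (d ++ w) a = rsweep N d c ++ r := by
  intro d
  induction d with
  | nil => simpa [rsweep] using h
  | cons x d' ih =>
    cases h3 : rsweep N d' c with
    | nil => exact absurd h3 (rsweep_ne_nil H _ _)
    | cons c₃ r₃ =>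
      have h4 : rsweep N (d' ++ w) a = c₃ :: (r₃ ++ r) := by rw [ih, h3]; rfl
      rw [List.cons_append, rsweep_cons h4, rsweep_cons h3, List.append_assoc]

/-- The key instance of Condition (home): the (mirror) domino computation. -/
lemma home121 {x y h0 c r₀ c' o : Γ} (hxy : NP N x y)
    (hyh : N [y, h0] = [c, r₀]) (hxc : N [x, c] = [c', o]) :
    N [x, y, h0] = [c', o, r₀] := by
  have h121 := (H.hhome x y h0).1
  rw [h121]
  show applyAtL _ 1 (applyAtL _ 2 (applyAtL _ 1 [x, y, h0])) = _
  rw [applyAtL_one]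
  show applyAtL _ 1 (applyAtL _ 2 (N [x,y] ++ [h0])) = _
  rw [hxy]
  show applyAtL _ 1 (x :: applyAtL _ 1 [y, h0]) = _
  rw [applyAtL_one]
  show applyAtL _ 1 (x :: (N [y, h0] ++ [])) = _
  rw [hyh]
  show N [x, c] ++ [r₀] = _
  rw [hxc]
  rfl

/-- Main sweep lemma : appending a letter to a normal word is normalised by the right sweep. -/
lemma rsweep_eq : ∀ (v : List Γ) (a : Γ), Nrm N v → N (v ++ [a]) = rsweep N v a := by
  intro v
  induction v with
  | nil => intro a _; simpa [rsweep] using H.hone a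
  | cons x t ih =>
    intro a hv
    cases t with
    | nil =>
      show N [x, a] = rsweep N [x] a
      have : rsweep N [x] a = N [x, a] ++ [] := rsweep_cons (rfl)
      rw [this, List.append_nil]
    | cons y t' =>
      have htail : Nrm N (y :: t') := hv.tail
      have iht : N ((y :: t') ++ [a]) = rsweep N (y :: t') a := ih a htail
      cases hr' : rsweep N t' a with
      | nil => exact absurd hr' (rsweep_ne_nil H _ _)
      | cons h0 r' =>
        have hyt : rsweep N (y :: t') a = N [y, h0] ++ r' := rsweep_cons hr'
        obtain ⟨c, r₀, hyh⟩ := pair_eq H y h0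
        obtain ⟨c', o, hxc⟩ := pair_eq H x c
        have hxy : NP N x y := (List.isChain_cons_cons.mp hv).1
        have h3 : N [x, y, h0] = [c', o, r₀] := home121 H hxy hyh hxc
        have hnrm3 : Nrm N (N [x, y, h0]) := nrm_N H (by simp)
        rw [h3] at hnrm3
        have hor : NP N o r₀ := (List.isChain_cons_cons.mp hnrm3.tail).1
        have hc'o : NP N c' o := by
          have h2 : Nrm N (N [x, c]) := nrm_N H (by simp)
          rw [hxc] at h2
          exact (List.isChain_cons_cons.mp h2).1
        -- N ((y::t') ++ [a]) = c :: r₀ :: r'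
        have hNt : N ((y :: t') ++ [a]) = c :: r₀ :: r' := by
          rw [iht, hyt, hyh]; rfl
        have hNtnrm : Nrm N (c :: r₀ :: r') := by
          have := nrm_N H (w := (y :: t') ++ [a]) (by simp)
          rwa [hNt] at this
        have hw : Nrm N (c' :: o :: r₀ :: r') :=
          List.isChain_cons_cons.mpr ⟨hc'o, List.isChain_cons_cons.mpr ⟨hor, hNtnrm.tail⟩⟩
        have hswp : rsweep N (x :: y :: t') a = N [x, c] ++ (r₀ :: r') := by
          have : rsweep N (y :: t') a = c :: (r₀ :: r') := by rw [hyt, hyh]; rfl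
          exact rsweep_cons this
        calc N ((x :: y :: t') ++ [a])
            = N ([x] ++ ((y :: t') ++ [a]) ++ []) := by simp
          _ = N ([x] ++ N ((y :: t') ++ [a]) ++ []) := (H.habs [x] ((y :: t') ++ [a]) [] (by simp)).symm
          _ = N ([] ++ [x, c] ++ (r₀ :: r')) := by rw [hNt]; simp
          _ = N ([] ++ N [x, c] ++ (r₀ :: r')) := (H.habs [] [x, c] (r₀ :: r') (by simp)).symm
          _ = N (c' :: o :: r₀ :: r') := by rw [hxc]; rfl
          _ = c' :: o :: r₀ :: r' := (nrm_iff H (by simp)).2 hw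
          _ = rsweep N (x :: y :: t') a := by rw [hswp, hxc]; rfl

end withGood

section withGoodDec
variable [DecidableEq Γ] (H : Good N e)
include H

/-- The truncation lemma: the last `n` letters of the `e`-stripped normal form of `v ++ [a]`
only depend on the last `n` letters of `v` (for normal `v`). -/
lemma trunc (n : ℕ) (v : List Γ) (a : Γ) (hv : Nrm N v) :
    rtake n (strip e (N (v ++ [a]))) = rtake n (strip e (N (rtake n v ++ [a]))) := by
  rcases le_or_gt v.length n with hle | hlt
  · rw [rtake_all hle]
  · have hvdw : v.take (v.length - n) ++ rtake n v = v := List.take_append_drop _ v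
    have hwnrm : Nrm N (rtake n v) := hv.suffix (rtake_suffix n v)
    have hwlen : (rtake n v).length = n := by
      unfold rtake; rw [List.length_drop]; omega
    cases hcr : rsweep N (rtake n v) a with
    | nil => exact absurd hcr (rsweep_ne_nil H _ _)
    | cons c r =>
      have hrlen : r.length = n := by
        have := rsweep_length H (rtake n v) a
        rw [hcr] at this
        simp only [List.length_cons, hwlen] at this
        omega
      have hWR : N (rtake n v ++ [a]) = c :: r := by
        rw [rsweep_eq H _ a hwnrm, hcr]
      have hWL : N (v ++ [a]) = rsweep N (v.take (v.length - n)) c ++ r := by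
        rw [rsweep_eq H v a hv]
        conv_lhs => rw [← hvdw]
        exact rsweep_append H hcr _
      by_cases hm : e ∈ r
      · obtain ⟨r₁, r₂, hr12⟩ := List.append_of_mem hm
        have hWnrm : Nrm N (rsweep N (v.take (v.length - n)) c ++ r) := by
          have := nrm_N H (w := v ++ [a]) (by simp)
          rwa [hWL] at this
        have hWRnrm : Nrm N (c :: r) := by
          have := nrm_N H (w := rtake n v ++ [a]) (by simp)
          rwa [hWR] at this
        have hXe : ∀ x ∈ rsweep N (v.take (v.length - n)) c, x = e := by
          intro x hx
          refine all_e H (rsweep N (v.take (v.length - n)) c ++ r₁) r₂ ?_ x (by simp [hx])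
          rw [List.append_assoc, ← hr12]
          exact hWnrm
        have hce : c = e := by
          refine all_e H (c :: r₁) r₂ ?_ c (by simp)
          have : c :: r = (c :: r₁) ++ e :: r₂ := by rw [hr12]; rfl
          rwa [this] at hWRnrm
        rw [hWL, hWR, strip_all_e r hXe, show c :: r = [c] ++ r from rfl,
          strip_all_e r (by simpa using hce)]
      · obtain ⟨A, hA⟩ := strip_append_of_not_mem hm (rsweep N (v.take (v.length - n)) c)
        obtain ⟨A', hA'⟩ := strip_append_of_not_mem hm [c]
        rw [hWL, hWR, hA, show c :: r = [c] ++ r from rfl, hA',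
          rtake_append A hrlen, rtake_append A' hrlen]

end withGoodDec

end Aux3

section Aux4

variable {Γ : Type} {N : List Γ → List Γ} {e : Γ} [DecidableEq Γ]

section withGood
variable (H : Good N e)
include H

lemma N_all_e_append {X : List Γ} (hX : ∀ x ∈ X, x = e) {w : List Γ} (hw : w ≠ []) :
    N (X ++ w) = X ++ N w := by
  induction X with
  | nil => simp
  | cons x X' ih =>
    have hx : x = e := hX x (by simp)
    have ih' := ih (fun y hy => hX y (by simp [hy]))
    rw [List.cons_append, hx, (H.hunit (X' ++ w) (by simp [hw])).1, ih']
    rfl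

omit H in
lemma Phi_nil : Phi N e [] = [] := rfl

omit H in
lemma Phi_ne {w : List Γ} (hw : w ≠ []) : Phi N e w = strip e (N w) := by
  rw [Phi, N'_ne _ hw]

lemma Phi_nrm (w : List Γ) : Nrm N (Phi N e w) := by
  cases w with
  | nil => exact List.isChain_nil
  | cons x t =>
    have h1 : Nrm N (N (x :: t)) := nrm_N H (by simp)
    exact h1.suffix (by rw [Phi, N'_ne _ (by simp)]; exact strip_suffix _)

lemma e_notin_Phi (w : List Γ) : e ∉ Phi N e w := by
  cases w with
  | nil => rw [Phi_nil]; simp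
  | cons x t =>
    have h1 : Nrm N (Phi N e (x :: t)) := Phi_nrm H _
    cases hs : Phi N e (x :: t) with
    | nil => simp
    | cons z t' =>
      have hz : z ≠ e := by
        apply strip_head_ne (N' N (x :: t))
        rw [← Phi]
        exact hs
      rw [hs] at h1
      exact e_notin H _ h1 z t' rfl hz

lemma Phi_fix {t : List Γ} (h1 : Nrm N t) (h2 : e ∉ t) : Phi N e t = t := by
  cases t with
  | nil => rfl
  | cons x s =>
    rw [Phi, N'_ne _ (by simp), (nrm_iff H (by simp)).2 h1]
    exact strip_of_not_mem h2

lemma Phi_append_one (y : List Γ) (a : Γ) :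
    Phi N e (y ++ [a]) = Phi N e (Phi N e y ++ [a]) := by
  cases hy : y with
  | nil => rfl
  | cons z t =>
    rw [← hy]
    have hyne : y ≠ [] := by rw [hy]; simp
    obtain ⟨X, hXd, hXe⟩ := strip_decomp (e := e) (N y)
    have h1 : N (y ++ [a]) = X ++ N (Phi N e y ++ [a]) := by
      have e1 : N (N y ++ [a]) = N (y ++ [a]) := by
        have := H.habs [] y [a] hyne
        simpa using this
      rw [← e1]
      have e2 : N y ++ [a] = X ++ (Phi N e y ++ [a]) := by
        conv_lhs => rw [hXd]
        rw [Phi_ne hyne, List.append_assoc]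
      rw [e2]
      exact N_all_e_append H hXe (by simp)
    rw [Phi_ne (show y ++ [a] ≠ [] by simp), Phi_ne (show Phi N e y ++ [a] ≠ [] by simp),
      h1, strip_all_e _ hXe]

omit H in
lemma tau_nil (n : ℕ) : tau N e n [] = [] := by
  show rtake n (Phi N e []) = []
  rw [Phi_nil]
  unfold rtake
  simp

lemma nrm_of_tau_fix {n : ℕ} {z : List Γ} (h : tau N e n z = z) : Nrm N z ∧ e ∉ z := by
  constructor
  · rw [← h]
    exact (Phi_nrm H z).suffix (rtake_suffix _ _)
  · intro hm
    rw [← h] at hm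
    exact e_notin_Phi H z ((rtake_suffix n (Phi N e z)).subset hm)

lemma tau_idem (n : ℕ) (z : List Γ) : tau N e n (tau N e n z) = tau N e n z := by
  have h1 : Nrm N (rtake n (Phi N e z)) := (Phi_nrm H z).suffix (rtake_suffix _ _)
  have h2 : e ∉ rtake n (Phi N e z) :=
    fun hm => e_notin_Phi H z ((rtake_suffix n (Phi N e z)).subset hm)
  show rtake n (Phi N e (rtake n (Phi N e z))) = _
  rw [Phi_fix H h1 h2, rtake_all (rtake_len_le _ _)]
  rfl

lemma tau_step (n : ℕ) (y : List Γ) (a : Γ) :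
    tau N e n (y ++ [a]) = tau N e n (tau N e n y ++ [a]) := by
  show rtake n (Phi N e (y ++ [a])) = rtake n (Phi N e (rtake n (Phi N e y) ++ [a]))
  rw [Phi_append_one H y a]
  have hnrm : Nrm N (Phi N e y) := Phi_nrm H y
  rw [Phi_ne (show Phi N e y ++ [a] ≠ [] by simp),
    Phi_ne (show rtake n (Phi N e y) ++ [a] ≠ [] by simp)]
  exact trunc H n (Phi N e y) a hnrm

lemma tau_key (n : ℕ) (z w : List Γ) :
    tau N e n (tau N e n z ++ w) = tau N e n (z ++ w) := by
  induction w using List.reverseRecOn with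
  | nil => simpa using tau_idem H n z
  | append_singleton w a ih =>
    rw [← List.append_assoc, tau_step H n (tau N e n z ++ w) a, ih,
      ← tau_step H n (z ++ w) a, List.append_assoc]

lemma tau_e {n : ℕ} {t : List Γ} (h1 : Nrm N t) (h2 : e ∉ t) :
    tau N e n (t ++ [e]) = tau N e n t := by
  cases t with
  | nil =>
    show rtake n (Phi N e [e]) = _
    have h3 : Phi N e [e] = [] := by
      rw [Phi_ne (show [e] ≠ ([] : List Γ) by simp), H.hone, strip_cons_e, strip_nil]
    rw [h3, tau_nil]
    unfold rtake
    simp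
  | cons x s =>
    have hne : (x :: s : List Γ) ≠ [] := by simp
    have hNt : N ((x :: s) ++ [e]) = e :: (x :: s) := by
      rw [(H.hunit (x :: s) hne).2, (nrm_iff H hne).2 h1]
    show rtake n (Phi N e ((x :: s) ++ [e])) = rtake n (Phi N e (x :: s))
    rw [Phi_ne (show (x :: s) ++ [e] ≠ [] by simp), hNt, strip_cons_e,
      Phi_ne hne, (nrm_iff H hne).2 h1, strip_of_not_mem h2]

end withGood

end Aux4

section Aux5

variable {Γ : Type} {N : List Γ → List Γ} {e : Γ} [DecidableEq Γ]

section withGood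
variable (H : Good N e)
include H

omit H in
lemma del_e (X : List Γ) (z : List Γ) (hX : ∀ x ∈ X, x = e) :
    (conGen (presRel N e)) (FreeMonoid.ofList (X ++ z)) (FreeMonoid.ofList z) := by
  induction X with
  | nil => exact (conGen (presRel N e)).refl _
  | cons x X' ih =>
    have hx : x = e := hX x (by simp)
    have ih' := ih (fun y hy => hX y (by simp [hy]))
    have h1 : (conGen (presRel N e)) (FreeMonoid.of e) 1 :=
      ConGen.Rel.of _ _ (Or.inr ⟨rfl, rfl⟩)
    have h2 : (conGen (presRel N e)) (FreeMonoid.of e * FreeMonoid.ofList (X' ++ z))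
        (1 * FreeMonoid.ofList (X' ++ z)) :=
      (conGen (presRel N e)).mul h1 ((conGen (presRel N e)).refl _)
    rw [one_mul] at h2
    have h3 : FreeMonoid.ofList ((x :: X') ++ z) =
        FreeMonoid.of e * FreeMonoid.ofList (X' ++ z) := by
      rw [hx]; rfl
    rw [h3]
    exact (conGen (presRel N e)).trans h2 ih'

lemma rep (w : FreeMonoid Γ) :
    (conGen (presRel N e)) w (FreeMonoid.ofList (Phi N e (FreeMonoid.toList w))) := by
  by_cases hw : FreeMonoid.toList w = []
  · have hw1 : w = 1 := by
      have := congrArg FreeMonoid.ofList hw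
      rwa [FreeMonoid.ofList_toList] at this
    rw [hw1]
    exact (conGen (presRel N e)).refl _
  · have s1 : (conGen (presRel N e)) w (FreeMonoid.ofList (N (FreeMonoid.toList w))) :=
      ConGen.Rel.of _ _ (Or.inl ⟨hw, by rw [FreeMonoid.toList_ofList]⟩)
    obtain ⟨X, hXd, hXe⟩ := strip_decomp (e := e) (N (FreeMonoid.toList w))
    have s2 : (conGen (presRel N e)) (FreeMonoid.ofList (N (FreeMonoid.toList w)))
        (FreeMonoid.ofList (Phi N e (FreeMonoid.toList w))) := by
      rw [Phi_ne hw]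
      conv_lhs => rw [hXd]
      exact del_e X _ hXe
    exact (conGen (presRel N e)).trans s1 s2

end withGood

end Aux5

end Aux


/-- Corollary `cor-resid`: any monoid with a quadratic normalisation
satisfying Conditions (unit) and (home) is residually finite. -/
theorem S1_residually_finite
    {Γ : Type} [Fintype Γ] [Nonempty Γ]
    (N : List Γ → List Γ) (e : Γ)
    (hlen : ∀ w : List Γ, (N w).length = w.length)
    (hone : ∀ x : Γ, N [x] = [x])
    (habs : ∀ u w v : List Γ, w ≠ [] → N (u ++ N w ++ v) = N (u ++ w ++ v))
    (hquad₁ : ∀ w : List Γ, w ≠ [] →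
      (N w = w ↔ ∀ p s : List Γ, ∀ x y : Γ, w = p ++ [x, y] ++ s → N [x, y] = [x, y]))
    (hquad₂ : ∀ w : List Γ, w ≠ [] →
      ∃ l : List ℕ, N w = seqApplyL (fun x y => N [x, y]) l w)
    (hunit : ∀ w : List Γ, w ≠ [] →
      N (e :: w) = e :: N w ∧ N (w ++ [e]) = e :: N w)
    (hhome : ∀ x y z : Γ,
      N [x, y, z] = seqApplyL (fun a b => N [a, b]) [1, 2, 1] [x, y, z] ∧
      N [x, y, z] = seqApplyL (fun a b => N [a, b]) [2, 1, 2, 1] [x, y, z]) :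
    ResiduallyFinite (conGen (presRel N e)).Quotient := by
  letI : DecidableEq Γ := Classical.decEq Γ
  have H : Good N e := ⟨hlen, hone, habs, hquad₁, hunit, hhome⟩
  intro x y hxy
  obtain ⟨u, rfl⟩ := Con.mk'_surjective x
  obtain ⟨v, rfl⟩ := Con.mk'_surjective y
  set c : Con (FreeMonoid Γ) := conGen (presRel N e) with hc
  -- distinct normal forms
  have hphi : Phi N e (FreeMonoid.toList u) ≠ Phi N e (FreeMonoid.toList v) := by
    intro hEq
    apply hxy
    have h1 := rep H u
    have h2 := rep H v
    rw [← hEq] at h2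
    have h3 : c u v := c.trans h1 (c.symm h2)
    have h4 : (u : c.Quotient) = (v : c.Quotient) := c.eq.mpr h3
    simpa using h4
  set n : ℕ := max (Phi N e (FreeMonoid.toList u)).length
      (Phi N e (FreeMonoid.toList v)).length with hn
  -- the finite state space
  let Q : Type := {t : List Γ // tau N e n t = t}
  have hlenQ : ∀ t : Q, t.val.length ≤ n := by
    intro t
    have h0 : t.val = rtake n (Phi N e t.val) := t.prop.symm
    calc t.val.length = (rtake n (Phi N e t.val)).length := by rw [← h0]
      _ ≤ n := rtake_len_le _ _
  haveI hQfin : Finite Q := by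
    haveI hfin : Finite {l : List Γ | l.length ≤ n} := (List.finite_length_le Γ n).to_subtype
    exact Finite.of_injective (β := {l : List Γ | l.length ≤ n})
      (fun t => ⟨t.val, hlenQ t⟩)
      (fun a b hab =>
        Subtype.ext (congrArg (Subtype.val : {l : List Γ | l.length ≤ n} → List Γ) hab))
  -- the action of words on truncated normal forms
  let act : FreeMonoid Γ → Q → Q := fun w t =>
    ⟨tau N e n (t.val ++ FreeMonoid.toList w), tau_idem H n _⟩
  haveI hEndfin : Finite (Function.End Q) := by
    show Finite (Q → Q)
    infer_instance
  haveI hFfin : Finite ((Function.End Q)ᵐᵒᵖ) := Finite.of_equiv _ MulOpposite.opEquiv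
  let ρ : FreeMonoid Γ →* (Function.End Q)ᵐᵒᵖ :=
    { toFun := fun w => MulOpposite.op (act w)
      map_one' := by
        rw [← MulOpposite.op_one]
        apply congrArg MulOpposite.op
        funext t
        apply Subtype.ext
        show tau N e n (t.val ++ FreeMonoid.toList 1) = t.val
        rw [FreeMonoid.toList_one, List.append_nil]
        exact t.prop
      map_mul' := by
        intro a b
        show MulOpposite.op (α := Function.End Q) (act (a * b))
          = MulOpposite.op (α := Function.End Q)
            (HMul.hMul (α := Function.End Q) (β := Function.End Q) (γ := Function.End Q)
              (act b) (act a))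
        apply congrArg MulOpposite.op
        funext t
        apply Subtype.ext
        show tau N e n (t.val ++ FreeMonoid.toList (a * b))
            = tau N e n (tau N e n (t.val ++ FreeMonoid.toList a) ++ FreeMonoid.toList b)
        rw [tau_key H n (t.val ++ FreeMonoid.toList a) (FreeMonoid.toList b),
          FreeMonoid.toList_mul, List.append_assoc] }
  have hker : c ≤ Con.ker ρ := by
    rw [hc]
    apply Con.conGen_le.mpr
    intro w₁ w₂ hrel
    rw [Con.ker_rel]
    apply congrArg MulOpposite.op
    funext t
    apply Subtype.ext
    rcases hrel with ⟨hne, hN⟩ | ⟨h1, h2⟩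
    · show tau N e n (t.val ++ FreeMonoid.toList w₁) = tau N e n (t.val ++ FreeMonoid.toList w₂)
      rw [hN]
      show rtake n (Phi N e (t.val ++ FreeMonoid.toList w₁)) = _
      have hPhi : Phi N e (t.val ++ FreeMonoid.toList w₁)
          = Phi N e (t.val ++ N (FreeMonoid.toList w₁)) := by
        rw [Phi_ne (show t.val ++ FreeMonoid.toList w₁ ≠ [] by simp [hne]),
          Phi_ne (show t.val ++ N (FreeMonoid.toList w₁) ≠ [] by
            simp [N_ne_nil H hne])]
        have := H.habs t.val (FreeMonoid.toList w₁) [] hne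
        simp only [List.append_nil] at this
        rw [this]
      rw [hPhi]
      rfl
    · show tau N e n (t.val ++ FreeMonoid.toList w₁) = tau N e n (t.val ++ FreeMonoid.toList w₂)
      rw [h1, h2, List.append_nil]
      obtain ⟨hnrm, hnot⟩ := nrm_of_tau_fix H t.prop
      exact tau_e H hnrm hnot
  refine ⟨(Function.End Q)ᵐᵒᵖ, inferInstance, c.lift ρ hker, hFfin, ?_⟩
  intro hfeq
  apply hphi
  have h1 : c.lift ρ hker (c.mk' u) = ρ u := by
    rw [Con.coe_mk', Con.lift_coe]
  have h2 : c.lift ρ hker (c.mk' v) = ρ v := by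
    rw [Con.coe_mk', Con.lift_coe]
  have h3 : ρ u = ρ v := by rw [← h1, ← h2, hfeq]
  have h4 : act u = act v := MulOpposite.op_injective h3
  have h5 : tau N e n ([] ++ FreeMonoid.toList u) = tau N e n ([] ++ FreeMonoid.toList v) :=
    congrArg (fun f : Q → Q => (f ⟨[], tau_nil n⟩).val) h4
  rw [List.nil_append, List.nil_append] at h5
  have hu : tau N e n (FreeMonoid.toList u) = Phi N e (FreeMonoid.toList u) :=
    rtake_all (le_max_left _ _)
  have hv : tau N e n (FreeMonoid.toList v) = Phi N e (FreeMonoid.toList v) :=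
    rtake_all (le_max_right _ _)
  rw [hu, hv] at h5
  exact h5


end Stmt5
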